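/- Let $t$ be a positive integer and let $p(y) = T_{1/t,\,2\sqrt{t}}(y)$ be the rescaled Chebyshev polynomial of degree $\lceil 2\sqrt{t}\rceil$ defined by $T_{\eta,s}(y) = T_{\lceil s\rceil}\big(\frac{2(1-y)}{1-\eta}-1\big)/T_{\lceil s\rceil}\big(\frac{2}{1-\eta}-1\big)$ with $\eta = 1/t$. Then $p(0) = 1$ and $|p(y)| \le 1/20$ for all $y \in [1/t, 1]$. -/

import Mathlib

/-- The rescaled and shifted Chebyshev polynomial `T_{η,s}`, as a function. -/
noncomputable def chebApprox (η s x : ℝ) : ℝ :=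
  (Polynomial.Chebyshev.T ℝ ⌈s⌉₊).eval (2 * (1 - x) / (1 - η) - 1) /
    (Polynomial.Chebyshev.T ℝ ⌈s⌉₊).eval (2 / (1 - η) - 1)

lemma T_real_cosh (θ : ℝ) (n : ℤ) :
    (Polynomial.Chebyshev.T ℝ n).eval (Real.cosh θ) = Real.cosh (n * θ) := by
  have h := Polynomial.Chebyshev.T_complex_cos ((θ : ℂ) * Complex.I) n
  rw [Complex.cos_mul_I] at h
  rw [show (n : ℂ) * ((θ : ℂ) * Complex.I) = (((n : ℝ) * θ : ℝ) : ℂ) * Complex.I by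
    push_cast; ring, Complex.cos_mul_I] at h
  have h2 := Polynomial.Chebyshev.complex_ofReal_eval_T (Real.cosh θ) n
  rw [Complex.ofReal_cosh] at h2
  have := h2.trans (h.trans (Complex.ofReal_cosh _).symm)
  exact_mod_cast this

lemma log_ratio_ge {y : ℝ} (h0 : 0 ≤ y) (h1 : y < 1) :
    2 * y ≤ Real.log ((1 + y) / (1 - y)) := by
  have h1y : (0:ℝ) < 1 - y := by linarith
  set f : ℝ → ℝ := fun x => Real.log (1 + x) - Real.log (1 - x) - 2 * x with hf
  have hder : ∀ x ∈ Set.Icc (0:ℝ) y,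
      HasDerivAt f (1 / (1 + x) + 1 / (1 - x) - 2) x := by
    intro x hx
    have hx1 : (0:ℝ) < 1 + x := by have := hx.1; linarith
    have hx2 : (0:ℝ) < 1 - x := by have := hx.2; linarith
    have ha : HasDerivAt (fun x : ℝ => Real.log (1 + x)) (1 / (1 + x)) x := by
      have := ((hasDerivAt_id x).const_add 1).log (ne_of_gt hx1)
      simpa using this
    have hb : HasDerivAt (fun x : ℝ => Real.log (1 - x)) (-1 / (1 - x)) x := by
      have := ((hasDerivAt_id x).const_sub 1).log (ne_of_gt hx2)
      simpa using this
    have hc : HasDerivAt (fun x : ℝ => 2 * x) 2 x := by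
      simpa using (hasDerivAt_id x).const_mul (2:ℝ)
    have := (ha.sub hb).sub hc
    exact this.congr_deriv (by ring)
  have hmono : MonotoneOn f (Set.Icc 0 y) := by
    apply monotoneOn_of_deriv_nonneg (convex_Icc _ _)
    · exact fun x hx => (hder x hx).continuousAt.continuousWithinAt
    · intro x hx
      rw [interior_Icc] at hx
      exact ((hder x ⟨le_of_lt hx.1, le_of_lt hx.2⟩).differentiableAt).differentiableWithinAt
    · intro x hx
      rw [interior_Icc] at hx
      have hx' : x ∈ Set.Icc (0:ℝ) y := ⟨le_of_lt hx.1, le_of_lt hx.2⟩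
      rw [(hder x hx').deriv]
      have hx1 : (0:ℝ) < 1 + x := by have := hx.1; linarith
      have hx2 : (0:ℝ) < 1 - x := by have := hx.2; linarith
      rw [div_add_div _ _ (ne_of_gt hx1) (ne_of_gt hx2), sub_nonneg, le_div_iff₀ (by positivity)]
      nlinarith [hx.1, hx.2]
  have hfy := hmono (Set.left_mem_Icc.2 h0) (Set.right_mem_Icc.2 h0) h0
  have hf0 : f 0 = 0 := by simp [hf]
  rw [hf0] at hfy
  have hlog : Real.log ((1 + y) / (1 - y)) = Real.log (1 + y) - Real.log (1 - y) :=
    Real.log_div (by linarith) (ne_of_gt h1y)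
  simp only [hf] at hfy
  linarith

theorem cheb_base_case (t : ℕ) (ht : 2 ≤ t) :
    chebApprox (1 / t) (2 * Real.sqrt t) 0 = 1 ∧
      ∀ y : ℝ, 1 / (t : ℝ) ≤ y → y ≤ 1 →
        |chebApprox (1 / t) (2 * Real.sqrt t) y| ≤ 1 / 20 := by
  have htR : (2:ℝ) ≤ (t:ℝ) := by exact_mod_cast ht
  have htpos : (0:ℝ) < t := by linarith
  set u := Real.sqrt t with hu
  have hu1 : 1 < u := by
    rw [hu, show (1:ℝ) = Real.sqrt 1 by simp]
    exact Real.sqrt_lt_sqrt (by norm_num) (by linarith)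
  have hu2 : u ^ 2 = t := Real.sq_sqrt (le_of_lt htpos)
  have hupos : (0:ℝ) < u := by linarith
  set n : ℕ := ⌈2 * u⌉₊ with hn
  have h1η : (0:ℝ) < 1 - 1 / (t:ℝ) := by
    rw [sub_pos, div_lt_one htpos]; linarith
  set θ₀ := Real.log ((u + 1) / (u - 1)) with hθ₀
  have hrpos : (0:ℝ) < (u + 1) / (u - 1) := div_pos (by linarith) (by linarith)
  have hexp : Real.exp θ₀ = (u + 1) / (u - 1) := Real.exp_log hrpos
  have hcosh : Real.cosh θ₀ = 2 / (1 - 1 / (t:ℝ)) - 1 := by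
    rw [Real.cosh_eq, Real.exp_neg, hexp]
    rw [show ((t:ℝ)) = u ^ 2 from hu2.symm]
    have hm : u - 1 ≠ 0 := ne_of_gt (by linarith)
    have hp : u + 1 ≠ 0 := by positivity
    have h0 : u ≠ 0 := ne_of_gt hupos
    have hq : u ^ 2 - 1 ≠ 0 := by nlinarith
    field_simp
    ring
  have hθge : 2 / u ≤ θ₀ := by
    have h01 : (0:ℝ) ≤ 1 / u := by positivity
    have h11 : 1 / u < 1 := by rw [div_lt_one hupos]; linarith
    have hkey := log_ratio_ge h01 h11
    have heq : (1 + 1 / u) / (1 - 1 / u) = (u + 1) / (u - 1) := by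
      have hne1 : 1 - 1 / u ≠ 0 := ne_of_gt (by linarith)
      have hne2 : u - 1 ≠ 0 := ne_of_gt (by linarith)
      rw [div_eq_div_iff hne1 hne2]
      field_simp
    rw [heq] at hkey
    calc 2 / u = 2 * (1 / u) := by ring
    _ ≤ θ₀ := hkey
  have hθpos : 0 < θ₀ := lt_of_lt_of_le (by positivity) hθge
  have hnu : 2 * u ≤ (n : ℝ) := Nat.le_ceil _
  have hnθ : (4:ℝ) ≤ (n : ℝ) * θ₀ := by
    calc (4:ℝ) = (2 * u) * (2 / u) := by field_simp; ring
    _ ≤ (2 * u) * θ₀ := by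
        apply mul_le_mul_of_nonneg_left hθge (by linarith)
    _ ≤ (n : ℝ) * θ₀ := mul_le_mul_of_nonneg_right hnu (le_of_lt hθpos)
  have hD : (20:ℝ) ≤ (Polynomial.Chebyshev.T ℝ (n : ℤ)).eval (2 / (1 - 1 / (t:ℝ)) - 1) := by
    rw [← hcosh, T_real_cosh]
    have h1 : Real.exp 4 ≤ Real.exp ((n : ℝ) * θ₀) := by
      apply Real.exp_le_exp.2
      push_cast
      exact hnθ
    have h2 : (40:ℝ) ≤ Real.exp 4 := by
      have he := Real.exp_one_gt_d9
      have h4 : Real.exp 4 = (Real.exp 1) ^ (4:ℕ) := by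
        rw [← Real.exp_nat_mul]; norm_num
      have h27 : (2.7:ℝ) ≤ Real.exp 1 := by linarith
      have := pow_le_pow_left₀ (by norm_num : (0:ℝ) ≤ 2.7) h27 4
      rw [h4]
      norm_num at this ⊢
      linarith
    have h3 := Real.exp_pos (-(((n:ℤ):ℝ) * θ₀))
    rw [Real.cosh_eq]
    have : Real.exp (((n:ℤ):ℝ) * θ₀) = Real.exp ((n:ℝ) * θ₀) := by push_cast; ring_nf
    linarith [this ▸ (le_trans h2 h1)]
  have hDpos : (0:ℝ) < (Polynomial.Chebyshev.T ℝ (n : ℤ)).eval (2 / (1 - 1 / (t:ℝ)) - 1) := by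
    linarith
  constructor
  · unfold chebApprox
    rw [show (2:ℝ) * (1 - 0) / (1 - 1 / (t:ℝ)) - 1 = 2 / (1 - 1 / (t:ℝ)) - 1 by norm_num]
    exact div_self (ne_of_gt hDpos)
  · intro y hy1 hy2
    unfold chebApprox
    rw [abs_div]
    set x := 2 * (1 - y) / (1 - 1 / (t:ℝ)) - 1 with hx
    have hx1 : x ≤ 1 := by
      rw [hx, sub_le_iff_le_add]
      rw [div_le_iff₀ h1η]
      nlinarith
    have hx2 : -1 ≤ x := by
      rw [hx, le_sub_iff_add_le]
      have : (0:ℝ) ≤ 2 * (1 - y) / (1 - 1 / (t:ℝ)) := by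
        apply div_nonneg (by linarith) (le_of_lt h1η)
      linarith
    have hnum : |(Polynomial.Chebyshev.T ℝ (n : ℤ)).eval x| ≤ 1 := by
      rw [show x = Real.cos (Real.arccos x) from (Real.cos_arccos hx2 hx1).symm,
        Polynomial.Chebyshev.T_real_cos]
      exact Real.abs_cos_le_one _
    rw [abs_of_pos hDpos]
    calc |(Polynomial.Chebyshev.T ℝ (n : ℤ)).eval x| /
          (Polynomial.Chebyshev.T ℝ (n : ℤ)).eval (2 / (1 - 1 / (t:ℝ)) - 1)
        ≤ 1 / 20 := div_le_div₀ (by norm_num) hnum (by norm_num) hD
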